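/- Let μ > 0 and suppose the multiplication operator I_a on ℝⁿ = X_a ⊕ X^a satisfies |I_a(w)| ≤ K ⟨w_a⟩^{-μ} ⟨w^a⟩^{μ}, and let ψ', ψ'' ∈ L²(X^a) decay exponentially (e^{ν|w^a|}ψ', e^{ν|w^a|}ψ'' ∈ L²(X^a) for some ν > 0). Then the function w_a ↦ ⟨w_a⟩^μ ∫_{X^a} I_a(w_a, w^a) conj(ψ'(w^a)) ψ''(w^a) dw^a is bounded on X_a. -/

import Mathlib

open MeasureTheory

open Filter in
-- auxiliary: polynomial weight times exponential decay is bounded on [0,∞)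
lemma aux_bound (μ ν : ℝ) (hμ : 0 < μ) (hν : 0 < ν) :
    ∃ C : ℝ, 0 ≤ C ∧ ∀ t : ℝ, 0 ≤ t →
      Real.sqrt (1 + t ^ 2) ^ μ * Real.exp (-(2 * ν) * t) ≤ C := by
  set F : ℝ → ℝ := fun t => Real.sqrt (1 + t ^ 2) ^ μ * Real.exp (-(2 * ν) * t) with hF
  have hcont : Continuous F := by
    apply Continuous.mul
    · exact (Real.continuous_sqrt.comp (continuous_const.add (continuous_pow 2))).rpow_const
        (fun x => Or.inr hμ.le)
    · exact Real.continuous_exp.comp (continuous_const.mul continuous_id)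
  have h0 : Tendsto (fun t : ℝ => t ^ μ * Real.exp (-(2 * ν) * t)) atTop (nhds 0) :=
    tendsto_rpow_mul_exp_neg_mul_atTop_nhds_zero μ (2 * ν) (by positivity)
  have hε : (0:ℝ) < ((Real.sqrt 2) ^ μ)⁻¹ := by positivity
  have hev : ∀ᶠ t in atTop, t ^ μ * Real.exp (-(2 * ν) * t) ≤ ((Real.sqrt 2) ^ μ)⁻¹ :=
    h0.eventually (eventually_le_nhds hε)
  obtain ⟨T, hT⟩ := (hev.and (eventually_ge_atTop (1:ℝ))).exists_forall_of_atTop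
  set T' : ℝ := max T 0 with hT'
  obtain ⟨C0, hC0⟩ := (isCompact_Icc (a := (0:ℝ)) (b := T')).exists_bound_of_continuousOn
    hcont.continuousOn
  refine ⟨max C0 1, le_trans zero_le_one (le_max_right _ _), fun t ht => ?_⟩
  rcases le_or_gt t T' with h | h
  · exact le_trans (le_trans (le_abs_self _) (hC0 t ⟨ht, h⟩)) (le_max_left _ _)
  · have hTt : T ≤ t := le_trans (le_max_left T 0) h.le
    obtain ⟨h1, h2⟩ := hT t hTt
    have hsq : Real.sqrt (1 + t ^ 2) ≤ Real.sqrt 2 * t := by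
      rw [show Real.sqrt 2 * t = Real.sqrt (2 * t ^ 2) by
        rw [Real.sqrt_mul (by norm_num), Real.sqrt_sq ht]]
      apply Real.sqrt_le_sqrt
      nlinarith
    have hpow : Real.sqrt (1 + t ^ 2) ^ μ ≤ (Real.sqrt 2) ^ μ * t ^ μ := by
      rw [← Real.mul_rpow (Real.sqrt_nonneg 2) ht]
      exact Real.rpow_le_rpow (Real.sqrt_nonneg _) hsq hμ.le
    have : F t ≤ (Real.sqrt 2) ^ μ * (t ^ μ * Real.exp (-(2 * ν) * t)) := by
      calc F t ≤ (Real.sqrt 2) ^ μ * t ^ μ * Real.exp (-(2 * ν) * t) :=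
            mul_le_mul_of_nonneg_right hpow (Real.exp_nonneg _)
        _ = _ := by ring
    refine le_trans (le_trans this ?_) (le_max_right _ _)
    calc (Real.sqrt 2) ^ μ * (t ^ μ * Real.exp (-(2 * ν) * t))
        ≤ (Real.sqrt 2) ^ μ * ((Real.sqrt 2) ^ μ)⁻¹ :=
          mul_le_mul_of_nonneg_left h1 (by positivity)
      _ = 1 := mul_inv_cancel₀ (by positivity)

/-- If `|I_a(w)| ≤ K ⟨w_a⟩^{-μ} ⟨w^a⟩^{μ}` and `ψ', ψ''` decay
exponentially in `L²(X^a)`, then `w_a ↦ ⟨w_a⟩^μ ∫_{X^a} I_a(w_a, w^a) conj(ψ') ψ'' dw^a`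
is bounded on `X_a`. -/
theorem stmt15 (m k : ℕ) (μ ν K : ℝ) (hμ : 0 < μ) (hν : 0 < ν)
    (Ia : EuclideanSpace ℝ (Fin m) × EuclideanSpace ℝ (Fin k) → ℂ)
    (hIa_meas : Measurable Ia)
    (hIa : ∀ w, ‖Ia w‖ ≤ K * Real.sqrt (1 + ‖w.1‖ ^ 2) ^ (-μ) *
      Real.sqrt (1 + ‖w.2‖ ^ 2) ^ μ)
    (ψ' ψ'' : EuclideanSpace ℝ (Fin k) → ℂ)
    (hψ' : MemLp (fun x => Real.exp (ν * ‖x‖) • ψ' x) 2 volume)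
    (hψ'' : MemLp (fun x => Real.exp (ν * ‖x‖) • ψ'' x) 2 volume) :
    ∃ B : ℝ, ∀ wa : EuclideanSpace ℝ (Fin m),
      ‖(Real.sqrt (1 + ‖wa‖ ^ 2) ^ μ : ℝ) •
        ∫ x : EuclideanSpace ℝ (Fin k),
          Ia (wa, x) * (starRingEnd ℂ) (ψ' x) * ψ'' x‖ ≤ B := by
  obtain ⟨C, hC0, hC⟩ := aux_bound μ ν hμ hν
  -- K is nonnegative
  have hK : 0 ≤ K := by
    have h := hIa (0, 0)
    simp only [norm_zero] at h
    norm_num [Real.sqrt_one] at h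
    exact le_trans (norm_nonneg _) h
  -- measurability of ψ', ψ''
  have hψ'm : AEStronglyMeasurable ψ' volume := by
    have heq : ψ' = fun x => Real.exp (-(ν * ‖x‖)) • (Real.exp (ν * ‖x‖) • ψ' x) := by
      funext x
      rw [smul_smul, ← Real.exp_add, neg_add_cancel, Real.exp_zero, one_smul]
    rw [heq]
    exact ((Real.continuous_exp.comp (continuous_const.mul continuous_norm).neg
      ).aestronglyMeasurable).smul hψ'.1
  have hψ''m : AEStronglyMeasurable ψ'' volume := by
    have heq : ψ'' = fun x => Real.exp (-(ν * ‖x‖)) • (Real.exp (ν * ‖x‖) • ψ'' x) := by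
      funext x
      rw [smul_smul, ← Real.exp_add, neg_add_cancel, Real.exp_zero, one_smul]
    rw [heq]
    exact ((Real.continuous_exp.comp (continuous_const.mul continuous_norm).neg
      ).aestronglyMeasurable).smul hψ''.1
  -- the L² exponential functions
  set F' : EuclideanSpace ℝ (Fin k) → ℝ := fun x => ‖Real.exp (ν * ‖x‖) • ψ' x‖ with hF'def
  set F'' : EuclideanSpace ℝ (Fin k) → ℝ := fun x => ‖Real.exp (ν * ‖x‖) • ψ'' x‖ with hF''def
  have hF' : MemLp F' 2 volume := hψ'.norm
  have hF'' : MemLp F'' 2 volume := hψ''.norm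
  have hmul : Integrable (fun x => F' x * F'' x) volume := by
    have : MemLp (F' • F'') 1 volume := hF''.smul hF'
    exact memLp_one_iff_integrable.mp this
  -- the weighted product is integrable
  set g : EuclideanSpace ℝ (Fin k) → ℝ :=
    fun x => Real.sqrt (1 + ‖x‖ ^ 2) ^ μ * (‖ψ' x‖ * ‖ψ'' x‖) with hgdef
  have hgnonneg : ∀ x, 0 ≤ g x := fun x => by positivity
  have hg : Integrable g volume := by
    refine Integrable.mono (hmul.const_mul C) ?_ (ae_of_all _ fun x => ?_)
    · exact ((Real.continuous_sqrt.comp (continuous_const.add (continuous_norm.pow 2))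
        ).rpow_const (fun x => Or.inr hμ.le)).aestronglyMeasurable.mul
        (hψ'm.norm.mul hψ''m.norm)
    · rw [Real.norm_of_nonneg (hgnonneg x)]
      have hFeq : F' x * F'' x =
          Real.exp (ν * ‖x‖) * Real.exp (ν * ‖x‖) * (‖ψ' x‖ * ‖ψ'' x‖) := by
        simp only [hF'def, hF''def, norm_smul, Real.norm_eq_abs,
          abs_of_pos (Real.exp_pos _)]
        ring
      have h1 := hC ‖x‖ (norm_nonneg x)
      have hE : (0:ℝ) ≤ Real.exp (ν * ‖x‖) * Real.exp (ν * ‖x‖) := by positivity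
      have hA : Real.sqrt (1 + ‖x‖ ^ 2) ^ μ =
          (Real.sqrt (1 + ‖x‖ ^ 2) ^ μ * Real.exp (-(2 * ν) * ‖x‖)) *
            (Real.exp (ν * ‖x‖) * Real.exp (ν * ‖x‖)) := by
        rw [mul_assoc, ← Real.exp_add, ← Real.exp_add,
          show -(2 * ν) * ‖x‖ + (ν * ‖x‖ + ν * ‖x‖) = 0 by ring, Real.exp_zero, mul_one]
      have h2 : Real.sqrt (1 + ‖x‖ ^ 2) ^ μ ≤
          C * (Real.exp (ν * ‖x‖) * Real.exp (ν * ‖x‖)) := by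
        rw [hA]; exact mul_le_mul_of_nonneg_right h1 hE
      rw [hFeq]
      calc Real.sqrt (1 + ‖x‖ ^ 2) ^ μ * (‖ψ' x‖ * ‖ψ'' x‖)
          ≤ (C * (Real.exp (ν * ‖x‖) * Real.exp (ν * ‖x‖))) * (‖ψ' x‖ * ‖ψ'' x‖) :=
            mul_le_mul_of_nonneg_right h2 (by positivity)
        _ = C * (Real.exp (ν * ‖x‖) * Real.exp (ν * ‖x‖) * (‖ψ' x‖ * ‖ψ'' x‖)) := by ring
        _ ≤ ‖C * (Real.exp (ν * ‖x‖) * Real.exp (ν * ‖x‖) * (‖ψ' x‖ * ‖ψ'' x‖))‖ :=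
            le_abs_self _
  refine ⟨K * ∫ x, g x, fun wa => ?_⟩
  set s : ℝ := Real.sqrt (1 + ‖wa‖ ^ 2) with hsdef
  have hs : 0 < s := Real.sqrt_pos.mpr (by positivity)
  have hspow : 0 < s ^ μ := Real.rpow_pos_of_pos hs μ
  have hsneg : 0 < s ^ (-μ) := Real.rpow_pos_of_pos hs _
  have hbound : ‖∫ x : EuclideanSpace ℝ (Fin k),
      Ia (wa, x) * (starRingEnd ℂ) (ψ' x) * ψ'' x‖ ≤
      ∫ x, (K * s ^ (-μ)) * g x := by
    refine norm_integral_le_of_norm_le (hg.const_mul _) (ae_of_all _ fun x => ?_)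
    rw [norm_mul, norm_mul, RCLike.norm_conj]
    calc ‖Ia (wa, x)‖ * ‖ψ' x‖ * ‖ψ'' x‖
        ≤ (K * s ^ (-μ) * Real.sqrt (1 + ‖x‖ ^ 2) ^ μ) * (‖ψ' x‖ * ‖ψ'' x‖) := by
          rw [mul_assoc]
          exact mul_le_mul_of_nonneg_right (hIa (wa, x)) (by positivity)
      _ = (K * s ^ (-μ)) * g x := by rw [hgdef]; ring
  rw [norm_smul, Real.norm_of_nonneg hspow.le]
  calc s ^ μ * ‖∫ x : EuclideanSpace ℝ (Fin k),
        Ia (wa, x) * (starRingEnd ℂ) (ψ' x) * ψ'' x‖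
      ≤ s ^ μ * ∫ x, (K * s ^ (-μ)) * g x := by
        exact mul_le_mul_of_nonneg_left hbound hspow.le
    _ = s ^ μ * ((K * s ^ (-μ)) * ∫ x, g x) := by rw [integral_const_mul]
    _ = (s ^ μ * s ^ (-μ)) * (K * ∫ x, g x) := by ring
    _ = K * ∫ x, g x := by
        rw [← Real.rpow_add hs, add_neg_cancel, Real.rpow_zero, one_mul]
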